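/- The transformation r3 of the quantum degenerate Garnier system G(1,1,1,2) is a quantum canonical transformation: suppose x1 is a unit of R, and define q1 = x1, p1 = η·x1^{-2}(x2 − 1) − α1·x1^{-1} + y1, q2 = x2, p2 = −η·x1^{-1} + y2. Then (q1, p1, q2, p2) again satisfy the canonical commutation relations: [q1,p1] = [q2,p2] = h and [q1,q2] = [p1,p2] = [q1,p2] = [q2,p1] = 0. -/
import Mathlib

section Aux
variable {R : Type*} [Ring R]

lemma br_add_r (a b c : R) : a*(b+c) - (b+c)*a = (a*b - b*a) + (a*c - c*a) := by noncomm_ring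
lemma br_sub_r (a b c : R) : a*(b-c) - (b-c)*a = (a*b - b*a) - (a*c - c*a) := by noncomm_ring
lemma br_neg_r (a b : R) : a*(-b) - (-b)*a = -(a*b - b*a) := by noncomm_ring
lemma br_mul_r (a b c : R) : a*(b*c) - (b*c)*a = (a*b - b*a)*c + b*(a*c - c*a) := by noncomm_ring
lemma br_add_l (a b c : R) : (b+c)*a - a*(b+c) = (b*a - a*b) + (c*a - a*c) := by noncomm_ring
lemma br_sub_l (a b c : R) : (b-c)*a - a*(b-c) = (b*a - a*b) - (c*a - a*c) := by noncomm_ring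
lemma br_neg_l (a b : R) : (-b)*a - a*(-b) = -(b*a - a*b) := by noncomm_ring
lemma br_mul_l (a b c : R) : (b*c)*a - a*(b*c) = (b*a - a*b)*c + b*(c*a - a*c) := by noncomm_ring

lemma swap_t {a b : R} (e : a * b = b * a) (t : R) : a * (b * t) = b * (a * t) := by
  rw [← mul_assoc, e, mul_assoc]

end Aux

theorem quantum_garnier_G1112_r3_canonical
    {R : Type*} [Ring R]
    (h η α1 : R)
    (hh : ∀ r : R, h * r = r * h)
    (hη : ∀ r : R, η * r = r * η)
    (hA1 : ∀ r : R, α1 * r = r * α1)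
    (x1 y1 x2 y2 : R)
    (hx1y1 : x1 * y1 - y1 * x1 = h)
    (hx2y2 : x2 * y2 - y2 * x2 = h)
    (hx1x2 : x1 * x2 - x2 * x1 = 0)
    (hy1y2 : y1 * y2 - y2 * y1 = 0)
    (hx1y2 : x1 * y2 - y2 * x1 = 0)
    (hx2y1 : x2 * y1 - y1 * x2 = 0)
    (x1i : R) (hx1il : x1i * x1 = 1) (hx1ir : x1 * x1i = 1)
    (q1 p1 q2 p2 : R)
    (hq1 : q1 = x1)
    (hp1 : p1 = η * x1i^2 * (x2 - 1) - α1 * x1i + y1)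
    (hq2 : q2 = x2)
    (hp2 : p2 = -(η * x1i) + y2) :
    q1 * p1 - p1 * q1 = h ∧ q2 * p2 - p2 * q2 = h ∧
    q1 * q2 - q2 * q1 = 0 ∧ p1 * p2 - p2 * p1 = 0 ∧
    q1 * p2 - p2 * q1 = 0 ∧ q2 * p1 - p1 * q2 = 0 := by
  rw [hq1, hp1, hq2, hp2]
  clear hq1 hp1 hq2 hp2
  -- basic commuting equalities
  have ex1x2 : x1 * x2 = x2 * x1 := sub_eq_zero.mp hx1x2
  have ex1y2 : x1 * y2 = y2 * x1 := sub_eq_zero.mp hx1y2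
  have ex2y1 : x2 * y1 = y1 * x2 := sub_eq_zero.mp hx2y1
  have ey1y2 : y1 * y2 = y2 * y1 := sub_eq_zero.mp hy1y2
  -- x1i commutes with x2
  have ex1ix2 : x1i * x2 = x2 * x1i := by
    calc x1i * x2 = x1i * x2 * (x1 * x1i) := by rw [hx1ir, mul_one]
    _ = x1i * (x2 * x1) * x1i := by noncomm_ring
    _ = x1i * (x1 * x2) * x1i := by rw [← ex1x2]
    _ = (x1i * x1) * (x2 * x1i) := by noncomm_ring
    _ = x2 * x1i := by rw [hx1il, one_mul]
  have ex1iy2 : x1i * y2 = y2 * x1i := by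
    calc x1i * y2 = x1i * y2 * (x1 * x1i) := by rw [hx1ir, mul_one]
    _ = x1i * (y2 * x1) * x1i := by noncomm_ring
    _ = x1i * (x1 * y2) * x1i := by rw [← ex1y2]
    _ = (x1i * x1) * (y2 * x1i) := by noncomm_ring
    _ = y2 * x1i := by rw [hx1il, one_mul]
  have ex1y1 : x1 * y1 = y1 * x1 + h := (sub_eq_iff_eq_add.mp hx1y1).trans (add_comm _ _)
  have ey1x1i : y1 * x1i = x1i * y1 + h * (x1i * x1i) := by
    calc y1 * x1i = (x1i * x1) * (y1 * x1i) := by rw [hx1il, one_mul]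
    _ = x1i * (x1 * y1) * x1i := by noncomm_ring
    _ = x1i * (y1 * x1 + h) * x1i := by rw [ex1y1]
    _ = (x1i * y1) * (x1 * x1i) + x1i * h * x1i := by noncomm_ring
    _ = x1i * y1 + h * (x1i * x1i) := by rw [hx1ir, mul_one, ← hh, mul_assoc]
  -- elementary bracket facts
  have b1 : x1 * x1i - x1i * x1 = 0 := by rw [hx1il, hx1ir, sub_self]
  have b2 : x1 * η - η * x1 = 0 := by rw [← hη, sub_self]
  have b3 : x1 * α1 - α1 * x1 = 0 := by rw [← hA1, sub_self]
  have b4 : x2 * η - η * x2 = 0 := by rw [← hη, sub_self]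
  have b5 : x2 * α1 - α1 * x2 = 0 := by rw [← hA1, sub_self]
  have b6 : x2 * x1i - x1i * x2 = 0 := by rw [ex1ix2, sub_self]
  have b7 : y2 * x1i - x1i * y2 = 0 := by rw [ex1iy2, sub_self]
  have b8 : y2 * η - η * y2 = 0 := by rw [← hη, sub_self]
  have b9 : y1 * η - η * y1 = 0 := by rw [← hη, sub_self]
  have b10 : y1 * α1 - α1 * y1 = 0 := by rw [← hA1, sub_self]
  have b11 : y1 * x1i - x1i * y1 = h * (x1i * x1i) := by rw [ey1x1i]; noncomm_ring
  have b12 : x1i * y1 - y1 * x1i = -(h * (x1i * x1i)) := by rw [ey1x1i]; noncomm_ring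
  have b13 : x2 * y1 - y1 * x2 = 0 := hx2y1
  have b14 : y1 * y2 - y2 * y1 = 0 := by rw [ey1y2, sub_self]
  have b15 : x1 * y2 - y2 * x1 = 0 := hx1y2
  have b16 : x1 * x2 - x2 * x1 = 0 := hx1x2
  have b17 : x2 * y2 - y2 * x2 = 0 ∨ True := Or.inr trivial
  refine ⟨?_, ?_, ?_, ?_, ?_, ?_⟩
  · simp only [pow_two, br_add_r, br_sub_r, br_mul_r, br_neg_r, mul_one, one_mul,
      b1, b2, b3, b16, hx1y1, b15, sub_self]
    noncomm_ring
  · simp only [br_add_r, br_sub_r, br_mul_r, br_neg_r, mul_one, one_mul,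
      b4, b6, hx2y2, sub_self]
    noncomm_ring
  · exact hx1x2
  · simp only [pow_two, br_add_r, br_sub_r, br_mul_r, br_neg_r,
      br_add_l, br_sub_l, br_mul_l, br_neg_l, mul_one, one_mul,
      sub_self, b1, b2, b4, b5, b6, b7, b8, b9, b10, b11, b12, hx2y2, b14]
    have s1 : x1i * η = η * x1i := (hη x1i).symm
    have s2 : x1i * h = h * x1i := (hh x1i).symm
    have s3 : x1i * α1 = α1 * x1i := (hA1 x1i).symm
    have s4 : x2 * η = η * x2 := (hη x2).symm
    have s5 : x2 * h = h * x2 := (hh x2).symm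
    have s6 : x2 * α1 = α1 * x2 := (hA1 x2).symm
    have s7 : y2 * η = η * y2 := (hη y2).symm
    have s8 : y2 * h = h * y2 := (hh y2).symm
    have s9 : y2 * α1 = α1 * y2 := (hA1 y2).symm
    have s10 : x2 * x1i = x1i * x2 := ex1ix2.symm
    have s11 : y2 * x1i = x1i * y2 := ex1iy2.symm
    have s12 : η * h = h * η := hh η |>.symm
    have s13 : α1 * h = h * α1 := hh α1 |>.symm
    have s14 : α1 * η = η * α1 := hη α1 |>.symm
    have e24 : y2 * x2 = x2 * y2 - h := by rw [← hx2y2]; noncomm_ring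
    have e24' : ∀ t : R, y2 * (x2 * t) = x2 * (y2 * t) - h * t := fun t => by
      rw [← mul_assoc, e24, sub_mul, mul_assoc]
    simp only [mul_assoc, neg_mul, mul_neg, mul_sub, sub_mul, neg_smul, one_smul,
      swap_t s1, swap_t s2, swap_t s3, swap_t s4, swap_t s5, swap_t s6, swap_t s7,
      swap_t s8, swap_t s9, swap_t s10, swap_t s11, swap_t s12, swap_t s13, swap_t s14,
      e24', s1, s2, s3, s4, s5, s6, s7, s8, s9, s10, s11, s12, s13, s14, e24,
      mul_zero, zero_mul, add_zero, zero_add, mul_one, one_mul, smul_zero,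
      sub_zero, zero_sub, neg_zero]
    abel_nf
    simp only [mul_assoc, neg_mul, mul_neg, mul_sub, sub_mul, neg_smul, one_smul,
      swap_t s1, swap_t s2, swap_t s3, swap_t s4, swap_t s5, swap_t s6, swap_t s7,
      swap_t s8, swap_t s9, swap_t s10, swap_t s11, swap_t s12, swap_t s13, swap_t s14,
      e24', s1, s2, s3, s4, s5, s6, s7, s8, s9, s10, s11, s12, s13, s14, e24,
      mul_zero, zero_mul, add_zero, zero_add, mul_one, one_mul, smul_zero,
      sub_zero, zero_sub, neg_zero]
    abel
  · simp only [br_add_r, br_sub_r, br_mul_r, br_neg_r, mul_one, one_mul,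
      b1, b2, b15, sub_self]
    noncomm_ring
  · simp only [pow_two, br_add_r, br_sub_r, br_mul_r, br_neg_r, mul_one, one_mul,
      b4, b5, b6, b13, sub_self]
    noncomm_ring
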